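/- For Hermitian matrices A_1, ..., A_n (n ≥ 2) and a density matrix ρ, Σ_{i=1}^n I_ρ(A_i) ≥ (1/(2(n−1))) Σ_{1≤i<j≤n} I_ρ(A_i + A_j). -/

import Mathlib

open Matrix Finset
open scoped ComplexOrder

/-- The positive semidefinite square root (definition of `Matrix.PosSemidef.sqrt` in the older Mathlib). -/
noncomputable def Matrix.PosSemidef.sqrt {d : ℕ} {ρ : Matrix (Fin d) (Fin d) ℂ}
    (hA : ρ.PosSemidef) : Matrix (Fin d) (Fin d) ℂ :=
  hA.1.eigenvectorUnitary.1 * diagonal ((↑) ∘ (√·) ∘ hA.1.eigenvalues) *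
  (star hA.1.eigenvectorUnitary : Matrix (Fin d) (Fin d) ℂ)

/-- Wigner–Yanase skew information `I_ρ(H) = (1/2)‖[√ρ, H]‖²` (Frobenius norm). -/
noncomputable def skewInfoR {d : ℕ} {ρ : Matrix (Fin d) (Fin d) ℂ}
    (hρ : ρ.PosSemidef) (H : Matrix (Fin d) (Fin d) ℂ) : ℝ :=
  1 / 2 * ∑ i, ∑ j, ‖(hρ.sqrt * H - H * hρ.sqrt) i j‖ ^ 2

lemma skewInfoR_add_le {d : ℕ} {ρ : Matrix (Fin d) (Fin d) ℂ}
    (hρ : ρ.PosSemidef) (A B : Matrix (Fin d) (Fin d) ℂ) :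
    skewInfoR hρ (A + B) ≤ 2 * skewInfoR hρ A + 2 * skewInfoR hρ B := by
  unfold skewInfoR
  have key : ∀ i j, ‖(hρ.sqrt * (A + B) - (A + B) * hρ.sqrt) i j‖ ^ 2 ≤
      2 * ‖(hρ.sqrt * A - A * hρ.sqrt) i j‖ ^ 2 +
      2 * ‖(hρ.sqrt * B - B * hρ.sqrt) i j‖ ^ 2 := by
    intro i j
    have heq : (hρ.sqrt * (A + B) - (A + B) * hρ.sqrt) i j =
        (hρ.sqrt * A - A * hρ.sqrt) i j + (hρ.sqrt * B - B * hρ.sqrt) i j := by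
      simp [Matrix.mul_add, Matrix.add_mul, Matrix.sub_apply, Matrix.add_apply]
      ring
    rw [heq]
    have h1 := norm_add_le ((hρ.sqrt * A - A * hρ.sqrt) i j) ((hρ.sqrt * B - B * hρ.sqrt) i j)
    have h2 : (0:ℝ) ≤ ‖(hρ.sqrt * A - A * hρ.sqrt) i j‖ := norm_nonneg _
    have h3 : (0:ℝ) ≤ ‖(hρ.sqrt * B - B * hρ.sqrt) i j‖ := norm_nonneg _
    have h4 : (0:ℝ) ≤ ‖(hρ.sqrt * A - A * hρ.sqrt) i j + (hρ.sqrt * B - B * hρ.sqrt) i j‖ :=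
      norm_nonneg _
    nlinarith [sq_nonneg (‖(hρ.sqrt * A - A * hρ.sqrt) i j‖ - ‖(hρ.sqrt * B - B * hρ.sqrt) i j‖)]
  have hsum : ∑ i, ∑ j, ‖(hρ.sqrt * (A + B) - (A + B) * hρ.sqrt) i j‖ ^ 2 ≤
      ∑ i, ∑ j, (2 * ‖(hρ.sqrt * A - A * hρ.sqrt) i j‖ ^ 2 +
        2 * ‖(hρ.sqrt * B - B * hρ.sqrt) i j‖ ^ 2) := by
    apply Finset.sum_le_sum; intro i _; apply Finset.sum_le_sum; intro j _; exact key i j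
  simp only [Finset.sum_add_distrib, ← Finset.mul_sum] at hsum ⊢
  linarith

theorem skewInfo_sum_ge_pairs_add {d n : ℕ} (hn : 2 ≤ n)
    (ρ : Matrix (Fin d) (Fin d) ℂ) (hρ : ρ.PosSemidef) (hτ : ρ.trace = 1)
    (A : Fin n → Matrix (Fin d) (Fin d) ℂ) (hA : ∀ i, (A i).IsHermitian) :
    ∑ i, skewInfoR hρ (A i) ≥
      (1 / (2 * ((n : ℝ) - 1))) *
        ∑ p ∈ Finset.univ.filter (fun p : Fin n × Fin n => p.1 < p.2),
          skewInfoR hρ (A p.1 + A p.2) := by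
  set f : Fin n → ℝ := fun i => skewInfoR hρ (A i) with hf
  set S := Finset.univ.filter (fun p : Fin n × Fin n => p.1 < p.2) with hS
  have hub : ∑ p ∈ S, skewInfoR hρ (A p.1 + A p.2) ≤ ∑ p ∈ S, (2 * f p.1 + 2 * f p.2) :=
    Finset.sum_le_sum (fun p _ => skewInfoR_add_le hρ (A p.1) (A p.2))
  have hswap : ∑ p ∈ S, f p.2 =
      ∑ p ∈ Finset.univ.filter (fun p : Fin n × Fin n => p.2 < p.1), f p.1 := by
    apply Finset.sum_nbij' (fun p => p.swap) (fun p => p.swap) <;> simp [hS]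
  have hcount : ∑ p ∈ S, (f p.1 + f p.2) = ((n : ℝ) - 1) * ∑ i, f i := by
    rw [Finset.sum_add_distrib, hswap]
    simp only [hS, Finset.sum_filter]
    rw [← Finset.sum_add_distrib, Fintype.sum_prod_type]
    have hinner : ∀ i : Fin n,
        (∑ j, ((if (i, j).1 < (i, j).2 then f (i, j).1 else 0) +
          if (i, j).2 < (i, j).1 then f (i, j).1 else 0)) = ((n : ℝ) - 1) * f i := by
      intro i
      have : ∀ j : Fin n, ((if i < j then f i else 0) + if j < i then f i else 0) =
          if i ≠ j then f i else 0 := by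
        intro j
        rcases lt_trichotomy i j with h | h | h
        · simp [h, h.ne, asymm h]
        · simp [h]
        · simp [h, h.ne', asymm h, (ne_of_gt h).symm]
      simp only [this]
      have hn1 : 1 ≤ n := le_trans (by norm_num) hn
      rw [← Finset.sum_filter, Finset.sum_const, Finset.filter_ne,
        Finset.card_erase_of_mem (Finset.mem_univ i), Finset.card_univ, Fintype.card_fin,
        nsmul_eq_mul]
      push_cast [Nat.cast_sub hn1]
      ring
    rw [Finset.sum_congr rfl (fun i _ => hinner i), ← Finset.mul_sum]
  have hpos : (0:ℝ) < 2 * ((n : ℝ) - 1) := by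
    have : (2:ℝ) ≤ n := by exact_mod_cast hn
    linarith
  have hub2 : ∑ p ∈ S, skewInfoR hρ (A p.1 + A p.2) ≤ 2 * ((n:ℝ) - 1) * ∑ i, f i := by
    calc ∑ p ∈ S, skewInfoR hρ (A p.1 + A p.2) ≤ ∑ p ∈ S, (2 * f p.1 + 2 * f p.2) := hub
    _ = 2 * ∑ p ∈ S, (f p.1 + f p.2) := by rw [Finset.mul_sum]; congr 1; ext p; ring
    _ = 2 * ((n:ℝ) - 1) * ∑ i, f i := by rw [hcount]; ring
  rw [ge_iff_le, div_mul_eq_mul_div, one_mul, div_le_iff₀ hpos]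
  nlinarith [hub2]
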